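/- arXiv:1109.2539 — 2 statements merged into one kernel-verified Lean document; each statement's English description precedes it below -/
import Mathlib

section
/- For 2 ≤ k ≤ N and admissible parameters, k(k-1)(2a+k)(2a+k+1) p_{k,N}(a,b,c) = [(a+b)(a+b+1)(a+c)(a+c+1)(N-1)N / ((b+c-N)(b+c-N+1))] · p_{k-2,N-2}(a+2,b,c). -/
/-- Pochhammer symbol `(a)_k = a(a+1)⋯(a+k-1)`. -/
noncomputable def poch (a : ℝ) (k : ℕ) : ℝ := ∏ i ∈ Finset.range k, (a + i)

/-- Normalizing constant `C_N(a,b,c)` of Wilson's 6-j weights. -/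
noncomputable def wC (N : ℕ) (a b c : ℝ) : ℝ :=
  poch (a - b + 1) N * poch (a - c + 1) N / (poch (2*a + 1) N * poch (-b - c + 1) N)

/-- Wilson's 6-j weight `p_{k,N}(a,b,c)`. -/
noncomputable def wp (k N : ℕ) (a b c : ℝ) : ℝ :=
  wC N a b c *
    (poch (2*a) k * poch (a + 1) k * poch (a + b) k * poch (a + c) k * poch (-(N : ℝ)) k /
      ((k.factorial : ℝ) * poch a k * poch (a - b + 1) k * poch (a - c + 1) k *
        poch (2*a + N + 1) k))

/-- The product of all Pochhammer factors appearing in denominators of `wp k N a b c`. -/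
noncomputable def wpden (k N : ℕ) (a b c : ℝ) : ℝ :=
  poch (2*a + 1) N * poch (-b - c + 1) N * poch a k * poch (a - b + 1) k *
    poch (a - c + 1) k * poch (2*a + N + 1) k

lemma poch_succ (x : ℝ) (n : ℕ) : poch x (n+1) = poch x n * (x + n) := by
  unfold poch; rw [Finset.prod_range_succ]

lemma poch_front (x : ℝ) (n : ℕ) : poch x (n+1) = x * poch (x+1) n := by
  induction n with
  | zero => simp [poch]
  | succ n ih =>
      rw [poch_succ, ih, poch_succ]
      push_cast; ring

lemma poch_front2 (x : ℝ) (n : ℕ) : poch x (n+2) = x * (x+1) * poch (x+2) n := by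
  rw [poch_front, poch_front]
  have : x + 1 + 1 = x + 2 := by ring
  rw [this]; ring

lemma poch_back2 (x : ℝ) (n : ℕ) : poch x (n+2) = poch x n * (x+n) * (x+n+1) := by
  rw [poch_succ, poch_succ]; push_cast; ring

lemma poch_shift2 (x : ℝ) (n : ℕ) :
    poch x n * (x+n) * (x+n+1) = x * (x+1) * poch (x+2) n := by
  rw [← poch_back2, poch_front2]

lemma poch_base_congr {x y : ℝ} (h : x = y) (n : ℕ) : poch x n = poch y n := by rw [h]

lemma poch_factor_ne {x : ℝ} {n : ℕ} (h : poch x n ≠ 0) {i : ℕ} (hi : i < n) :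
    x + i ≠ 0 := by
  intro hc
  exact h (Finset.prod_eq_zero (Finset.mem_range.2 hi) hc)

set_option maxHeartbeats 1000000 in
theorem wilson_step_two (k N : ℕ) (a b c : ℝ) (hk : 2 ≤ k) (hkN : k ≤ N)
    (h1 : wpden k N a b c ≠ 0) (h2 : wpden (k - 2) (N - 2) (a + 2) b c ≠ 0)
    (h3 : b + c - N ≠ 0) (h4 : b + c - N + 1 ≠ 0) :
    (k : ℝ) * ((k : ℝ) - 1) * (2*a + k) * (2*a + k + 1) * wp k N a b c
      = (a + b) * (a + b + 1) * (a + c) * (a + c + 1) * ((N : ℝ) - 1) * N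
          / ((b + c - N) * (b + c - N + 1)) * wp (k - 2) (N - 2) (a + 2) b c := by
  obtain ⟨m, rfl⟩ : ∃ m, k = m + 2 := ⟨k - 2, by omega⟩
  obtain ⟨M, rfl⟩ : ∃ M, N = M + 2 := ⟨N - 2, by omega⟩
  have hmM : m ≤ M := by omega
  simp only [Nat.add_sub_cancel] at h2 ⊢
  unfold wp wC wpden at *
  push_cast at h1 h2 h3 h4 ⊢
  simp only [mul_ne_zero_iff] at h1 h2
  obtain ⟨⟨⟨⟨⟨A1, A2⟩, A3⟩, A4⟩, A5⟩, A6⟩ := h1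
  obtain ⟨⟨⟨⟨⟨B1, B2⟩, B3⟩, B4⟩, B5⟩, B6⟩ := h2
  -- the contiguous band of nonzero linear factors 2a + j
  have key : ∀ j : ℕ, 1 ≤ j → j ≤ M + m + 4 → 2*a + j ≠ 0 := by
    intro j hj1 hj2
    rcases le_or_gt j (M + 2) with h | h
    · have hf := poch_factor_ne A1 (show j - 1 < M + 2 by omega)
      rw [Nat.cast_sub hj1] at hf
      intro hc; apply hf; push_cast; linarith
    · have hf := poch_factor_ne A6 (show j - (M + 3) < m + 2 by omega)
      rw [Nat.cast_sub (show M + 3 ≤ j by omega)] at hf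
      intro hc; apply hf; push_cast; linarith
  have c1 : 2*a + 1 ≠ 0 := by
    have := key 1 (by omega) (by omega); intro hc; apply this; push_cast; linarith
  have c2 : 2*a + 2 ≠ 0 := by
    have := key 2 (by omega) (by omega); intro hc; apply this; push_cast; linarith
  have c3 : 2*a + 3 ≠ 0 := by
    have := key 3 (by omega) (by omega); intro hc; apply this; push_cast; linarith
  have c4 : 2*a + 4 ≠ 0 := by
    have := key 4 (by omega) (by omega); intro hc; apply this; push_cast; linarith
  have cm2 : 2*a + (m:ℝ) + 2 ≠ 0 := by
    have := key (m + 2) (by omega) (by omega); intro hc; apply this; push_cast; linarith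
  have cm3 : 2*a + (m:ℝ) + 3 ≠ 0 := by
    have := key (m + 3) (by omega) (by omega); intro hc; apply this; push_cast; linarith
  have cM3 : 2*a + (M:ℝ) + 3 ≠ 0 := by
    have := key (M + 3) (by omega) (by omega); intro hc; apply this; push_cast; linarith
  have cM4 : 2*a + (M:ℝ) + 4 ≠ 0 := by
    have := key (M + 4) (by omega) (by omega); intro hc; apply this; push_cast; linarith
  have ha : a ≠ 0 := by
    have := poch_factor_ne A3 (show 0 < m + 2 by omega)
    intro hc; apply this; push_cast; linarith
  have ha1 : a + 1 ≠ 0 := by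
    have := poch_factor_ne A3 (show 1 < m + 2 by omega)
    intro hc; apply this; push_cast; linarith
  have hab1 : a - b + 1 ≠ 0 := by
    have := poch_factor_ne A4 (show 0 < m + 2 by omega)
    intro hc; apply this; push_cast; linarith
  have hab2 : a - b + 2 ≠ 0 := by
    have := poch_factor_ne A4 (show 1 < m + 2 by omega)
    intro hc; apply this; push_cast; linarith
  have hac1 : a - c + 1 ≠ 0 := by
    have := poch_factor_ne A5 (show 0 < m + 2 by omega)
    intro hc; apply this; push_cast; linarith
  have hac2 : a - c + 2 ≠ 0 := by
    have := poch_factor_ne A5 (show 1 < m + 2 by omega)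
    intro hc; apply this; push_cast; linarith
  have hfm : ((m.factorial : ℝ)) ≠ 0 := by positivity
  have hm1 : (m:ℝ) + 1 ≠ 0 := by positivity
  have hm2 : (m:ℝ) + 2 ≠ 0 := by positivity
  -- canonical forms for the atoms coming from h2
  have hB1 : poch (2*a + 5) M ≠ 0 := by
    rwa [poch_base_congr (show 2*(a+2) + 1 = 2*a + 5 by ring)] at B1
  have hB4 : poch (a - b + 3) m ≠ 0 := by
    rwa [poch_base_congr (show a + 2 - b + 1 = a - b + 3 by ring)] at B4
  have hB5 : poch (a - c + 3) m ≠ 0 := by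
    rwa [poch_base_congr (show a + 2 - c + 1 = a - c + 3 by ring)] at B5
  have hB6 : poch (2*a + (M:ℝ) + 5) m ≠ 0 := by
    rwa [poch_base_congr (show 2*(a+2) + (M:ℝ) + 1 = 2*a + (M:ℝ) + 5 by ring)] at B6
  -- rewriting lemmas for the left-hand side
  have g1 : poch (a - b + 1) (M + 2) = (a-b+1) * (a-b+2) * poch (a-b+3) M := by
    rw [poch_front2, poch_base_congr (show a - b + 1 + 2 = a - b + 3 by ring)]; ring
  have g2 : poch (a - c + 1) (M + 2) = (a-c+1) * (a-c+2) * poch (a-c+3) M := by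
    rw [poch_front2, poch_base_congr (show a - c + 1 + 2 = a - c + 3 by ring)]; ring
  have e3 : poch (2*a + 3) M
      = (2*a+3) * (2*a+4) * poch (2*a+5) M / ((2*a + (M:ℝ) + 3) * (2*a + (M:ℝ) + 4)) := by
    rw [eq_div_iff (mul_ne_zero cM3 cM4)]
    have hs := poch_shift2 (2*a + 3) M
    rw [poch_base_congr (show 2*a + 3 + 2 = 2*a + 5 by ring)] at hs
    linear_combination hs
  have g3 : poch (2*a + 1) (M + 2)
      = (2*a+1) * (2*a+2) *
        ((2*a+3) * (2*a+4) * poch (2*a+5) M / ((2*a + (M:ℝ) + 3) * (2*a + (M:ℝ) + 4))) := by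
    rw [poch_front2, poch_base_congr (show 2*a + 1 + 2 = 2*a + 3 by ring), e3]; ring
  have g4 : poch (-b - c + 1) (M + 2)
      = poch (-b - c + 1) M * ((b + c - ((M:ℝ) + 2)) * (b + c - ((M:ℝ) + 2) + 1)) := by
    rw [poch_back2]; ring
  have e5 : poch (2*a + 2) m
      = (2*a+2) * (2*a+3) * poch (2*a+4) m / ((2*a + (m:ℝ) + 2) * (2*a + (m:ℝ) + 3)) := by
    rw [eq_div_iff (mul_ne_zero cm2 cm3)]
    have hs := poch_shift2 (2*a + 2) m
    rw [poch_base_congr (show 2*a + 2 + 2 = 2*a + 4 by ring)] at hs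
    linear_combination hs
  have g5 : poch (2*a) (m + 2)
      = 2*a * (2*a+1) *
        ((2*a+2) * (2*a+3) * poch (2*a+4) m / ((2*a + (m:ℝ) + 2) * (2*a + (m:ℝ) + 3))) := by
    rw [poch_front2, e5]
  have g6 : poch (a + 1) (m + 2) = (a+1) * (a+2) * poch (a+3) m := by
    rw [poch_front2, poch_base_congr (show a + 1 + 2 = a + 3 by ring)]; ring
  have g7 : poch (a + b) (m + 2) = (a+b) * (a+b+1) * poch (a+b+2) m :=
    poch_front2 _ _
  have g8 : poch (a + c) (m + 2) = (a+c) * (a+c+1) * poch (a+c+2) m :=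
    poch_front2 _ _
  have g9 : poch (-((M:ℝ) + 2)) (m + 2) = ((M:ℝ)+2) * ((M:ℝ)+1) * poch (-(M:ℝ)) m := by
    rw [poch_front2, poch_base_congr (show -((M:ℝ) + 2) + 2 = -(M:ℝ) by ring)]; ring
  have g10 : (((m+2).factorial : ℝ)) = ((m:ℝ)+2) * ((m:ℝ)+1) * (m.factorial : ℝ) := by
    rw [Nat.factorial_succ, Nat.factorial_succ]; push_cast; ring
  have g11 : poch a (m + 2) = a * (a+1) * poch (a+2) m := poch_front2 _ _
  have g12 : poch (a - b + 1) (m + 2) = (a-b+1) * (a-b+2) * poch (a-b+3) m := by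
    rw [poch_front2, poch_base_congr (show a - b + 1 + 2 = a - b + 3 by ring)]; ring
  have g13 : poch (a - c + 1) (m + 2) = (a-c+1) * (a-c+2) * poch (a-c+3) m := by
    rw [poch_front2, poch_base_congr (show a - c + 1 + 2 = a - c + 3 by ring)]; ring
  have g14 : poch (2*a + ((M:ℝ) + 2) + 1) (m + 2)
      = (2*a + (M:ℝ) + 3) * (2*a + (M:ℝ) + 4) * poch (2*a + (M:ℝ) + 5) m := by
    rw [poch_base_congr (show 2*a + ((M:ℝ) + 2) + 1 = 2*a + (M:ℝ) + 3 by ring), poch_front2,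
      poch_base_congr (show 2*a + (M:ℝ) + 3 + 2 = 2*a + (M:ℝ) + 5 by ring)]; ring
  -- canonicalize the right-hand side bases
  have r1 : poch (a + 2 - b + 1) M = poch (a - b + 3) M :=
    poch_base_congr (by ring) M
  have r2 : poch (a + 2 - c + 1) M = poch (a - c + 3) M :=
    poch_base_congr (by ring) M
  have r3 : poch (2*(a+2) + 1) M = poch (2*a + 5) M :=
    poch_base_congr (by ring) M
  have r4 : poch (2*(a+2)) m = poch (2*a + 4) m :=
    poch_base_congr (by ring) m
  have r5 : poch (a + 2 + 1) m = poch (a + 3) m :=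
    poch_base_congr (by ring) m
  have r6 : poch (a + 2 + b) m = poch (a + b + 2) m :=
    poch_base_congr (by ring) m
  have r7 : poch (a + 2 + c) m = poch (a + c + 2) m :=
    poch_base_congr (by ring) m
  have r8 : poch (a + 2 - b + 1) m = poch (a - b + 3) m :=
    poch_base_congr (by ring) m
  have r9 : poch (a + 2 - c + 1) m = poch (a - c + 3) m :=
    poch_base_congr (by ring) m
  have r10 : poch (2*(a+2) + (M:ℝ) + 1) m = poch (2*a + (M:ℝ) + 5) m :=
    poch_base_congr (by ring) m
  rw [g1, g2, g3, g4, g5, g6, g7, g8, g9, g10, g11, g12, g13, g14,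
      r1, r2, r3, r4, r5, r6, r7, r8, r9, r10,
      show (2*a + ((m:ℝ) + 2) + 1) = 2*a + (m:ℝ) + 3 by ring,
      show (2*a + ((m:ℝ) + 2)) = 2*a + (m:ℝ) + 2 by ring,
      show ((m:ℝ) + 2 - 1) = (m:ℝ) + 1 by ring,
      show ((M:ℝ) + 2 - 1) = (M:ℝ) + 1 by ring]
  set p1 := poch (a - b + 3) M
  set p2 := poch (a - c + 3) M
  set p3 := poch (2*a + 5) M
  set p4 := poch (-b - c + 1) M
  set p5 := poch (2*a + 4) m
  set p6 := poch (a + 3) m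
  set p7 := poch (a + b + 2) m
  set p8 := poch (a + c + 2) m
  set p9 := poch (-(M:ℝ)) m
  set p10 := poch (a + 2) m
  set p11 := poch (a - b + 3) m
  set p12 := poch (a - c + 3) m
  set p13 := poch (2*a + (M:ℝ) + 5) m
  set fm := ((m.factorial : ℝ))
  set d2 := b + c - ((M:ℝ) + 2) + 1
  set d1 := b + c - ((M:ℝ) + 2)
  set t3 := 2*a + (M:ℝ) + 3
  set t4 := 2*a + (M:ℝ) + 4
  set u2 := 2*a + (m:ℝ) + 2
  set u3 := 2*a + (m:ℝ) + 3
  set v1 := 2*a + 1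
  set v2 := 2*a + 2
  set v3 := 2*a + 3
  set v4 := 2*a + 4 with hv4
  set ab1 := a - b + 1
  set ab2 := a - b + 2
  set ac1 := a - c + 1
  set ac2 := a - c + 2
  set qb := a + b
  set qb1 := a + b + 1
  set qc := a + c
  set qc1 := a + c + 1
  set w1 := a + 1
  set w2 := a + 2 with hw2
  set mm1 := (m:ℝ) + 1
  set mm2 := (m:ℝ) + 2
  set MM1 := (M:ℝ) + 1
  set MM2 := (M:ℝ) + 2
  set z2 := 2*a with hz2
  have hrel : z2 * w2 = a * v4 := by rw [hz2, hw2, hv4]; ring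
  clear_value p1 p2 p3 p4 p5 p6 p7 p8 p9 p10 p11 p12 p13 fm d2 d1 t3 t4 u2 u3 v1 v2 v3 v4 ab1 ab2 ac1 ac2 qb qb1 qc qc1 w1 w2 mm1 mm2 MM1 MM2 z2
  refine Eq.trans (b := (mm2*mm2⁻¹)*(mm1*mm1⁻¹)*(u2*u2⁻¹)*(u3*u3⁻¹)*(ab1*ab1⁻¹)*(ab2*ab2⁻¹)*(ac1*ac1⁻¹)*(ac2*ac2⁻¹)*(v1*v1⁻¹)*(v2*v2⁻¹)*(v3*v3⁻¹)*(t3*t3⁻¹)*(t4*t4⁻¹)*(w1*w1⁻¹)*((z2*w2)*(v4⁻¹*a⁻¹)) * (qb * qb1 * qc * qc1 * MM1 * MM2 / (d1 * d2) * (p1 * p2 / (p3 * p4) * (p5 * p6 * p7 * p8 * p9 / (fm * p10 * p11 * p12 * p13))))) ?_ ?_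
  · simp only [div_eq_mul_inv, mul_inv, inv_inv]
    ring
  · rw [hrel, show a * v4 * (v4⁻¹ * a⁻¹) = (a * a⁻¹) * (v4 * v4⁻¹) by ring, mul_inv_cancel₀ ha, mul_inv_cancel₀ c4,
      mul_inv_cancel₀ hm2, mul_inv_cancel₀ hm1, mul_inv_cancel₀ cm2, mul_inv_cancel₀ cm3, mul_inv_cancel₀ hab1,
      mul_inv_cancel₀ hab2, mul_inv_cancel₀ hac1, mul_inv_cancel₀ hac2, mul_inv_cancel₀ c1, mul_inv_cancel₀ c2,
      mul_inv_cancel₀ c3, mul_inv_cancel₀ cM3, mul_inv_cancel₀ cM4, mul_inv_cancel₀ ha1]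
    ring
end

section
/- Define Π_k(a,c;N) = (c)_N (a)_k (-N)_k / [(c-a)_N k! (c)_k] for k = 0,...,N. If c > 0 and a < 1-N, then Π_k(a,c;N) ≥ 0, and for k ≥ 1 one has k·Π_k(a,c;N) = [aN/(a-c-N+1)] · Π_{k-1}(a+1, c+1; N-1). -/
/-- The weights `Π_k(a,c;N)`. -/
noncomputable def Piw (k : ℕ) (a c : ℝ) (N : ℕ) : ℝ :=
  poch c N * poch a k * poch (-(N : ℝ)) k / (poch (c - a) N * (k.factorial : ℝ) * poch c k)

lemma poch_pos {x : ℝ} (hx : 0 < x) (k : ℕ) : 0 < poch x k :=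
  Finset.prod_pos fun i _ => by positivity

lemma poch_succ_left (x : ℝ) (k : ℕ) : poch x (k+1) = x * poch (x+1) k := by
  unfold poch
  rw [Finset.prod_range_succ']
  have h : ∀ i ∈ Finset.range k, (x + ((i+1 : ℕ) : ℝ)) = (x+1) + i := by
    intro i _; push_cast; ring
  rw [Finset.prod_congr rfl h]
  push_cast
  ring

lemma poch_succ_right (x : ℝ) (k : ℕ) : poch x (k+1) = poch x k * (x + k) :=
  Finset.prod_range_succ _ _

lemma key_nonneg {a : ℝ} {N k : ℕ} (hk : k ≤ N) (ha : a < 1 - N) :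
    0 ≤ poch a k * poch (-(N:ℝ)) k := by
  unfold poch
  rw [← Finset.prod_mul_distrib]
  apply Finset.prod_nonneg
  intro i hi
  have hi' : i < k := Finset.mem_range.mp hi
  have h1 : a + i ≤ 0 := by
    have hik : (i:ℝ) + 1 ≤ k := by exact_mod_cast hi'
    have hkN : (k:ℝ) ≤ N := by exact_mod_cast hk
    linarith
  have h2 : -(N:ℝ) + i ≤ 0 := by
    have : (i:ℝ) < N := by exact_mod_cast lt_of_lt_of_le hi' hk
    linarith
  nlinarith

theorem Piw_nonneg_and_step (N : ℕ) (a c : ℝ) (hN : 1 ≤ N)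
    (hc : 0 < c) (ha : a < 1 - N) :
    ∀ k ≤ N, 0 ≤ Piw k a c N ∧
      (1 ≤ k → (k : ℝ) * Piw k a c N
        = a * N / (a - c - N + 1) * Piw (k - 1) (a + 1) (c + 1) (N - 1)) := by
  intro k hk
  have hNr : (1:ℝ) ≤ N := by exact_mod_cast hN
  have hca : 0 < c - a := by linarith
  constructor
  · unfold Piw
    apply div_nonneg
    · have h1 := key_nonneg hk ha
      have h2 := (poch_pos hc N).le
      nlinarith
    · have hd1 := poch_pos hca N
      have hd2 := poch_pos hc k
      have hd3 : (0:ℝ) < k.factorial := by exact_mod_cast k.factorial_pos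
      positivity
  · intro hk1
    obtain ⟨m, rfl⟩ : ∃ m, k = m + 1 := ⟨k-1, (Nat.succ_pred_eq_of_pos hk1).symm⟩
    obtain ⟨n, rfl⟩ : ∃ n, N = n + 1 := ⟨N-1, (Nat.succ_pred_eq_of_pos hN).symm⟩
    simp only [Nat.add_sub_cancel]
    unfold Piw
    have e1 : poch c (n+1) = c * poch (c+1) n := poch_succ_left c n
    have e2 : poch a (m+1) = a * poch (a+1) m := poch_succ_left a m
    have e3 : poch (-((n+1 : ℕ):ℝ)) (m+1) = (-((n+1 : ℕ):ℝ)) * poch (-(n:ℝ)) m := by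
      rw [poch_succ_left]
      congr 2
      push_cast; ring
    have e4 : poch (c - a) (n+1) = poch (c-a) n * (c - a + n) := poch_succ_right _ n
    have e5 : poch c (m+1) = c * poch (c+1) m := poch_succ_left c m
    have e6 : c + 1 - (a + 1) = c - a := by ring
    have e7 : (((m+1).factorial : ℕ) : ℝ) = ((m:ℝ)+1) * (m.factorial : ℝ) := by
      rw [Nat.factorial_succ]; push_cast; ring
    rw [e1, e2, e3, e4, e5, e6, e7]
    have hmn : m ≤ n := Nat.lt_succ_iff.mp hk
    have hP1 := poch_pos (by linarith : (0:ℝ) < c + 1) n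
    have hP4 := poch_pos hca n
    have hP5 := poch_pos (by linarith : (0:ℝ) < c + 1) m
    have hfm : (m.factorial : ℝ) ≠ 0 := by positivity
    have hnr : (0:ℝ) ≤ n := Nat.cast_nonneg n
    have hnN : ((n+1:ℕ):ℝ) = (n:ℝ) + 1 := by push_cast; ring
    rw [hnN]
    have hden : a - c - ((n:ℝ)+1) + 1 ≠ 0 := by
      have : a < -(n:ℝ) := by
        have : ((n+1:ℕ):ℝ) = (n:ℝ)+1 := by push_cast; ring
        rw [this] at ha; linarith
      intro h; nlinarith
    have hcan : c - a + n ≠ 0 := by positivity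
    have hm1 : ((m:ℝ)+1) ≠ 0 := by positivity
    have hc' : c ≠ 0 := ne_of_gt hc
    field_simp
    push_cast
    ring
end
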